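/- Let A be a K-algebra that is a domain with degree function v, C a K-subalgebra of A, δ : C → C a K-linear map with drop Δ = Δ_{δ,v}, and C' := C∖K, and suppose conditions (1)–(5) hold: (1) Δ(ab) ≤ max{Δ(a), Δ(b)} for all a,b ∈ C; (2) Δ(aⁿ) = Δ(a) for all a ∈ C and n ≥ 1; (3) v(c) ≥ 0 for all nonzero c ∈ C and v(C'∖{0}) ≠ {0}; (4) dim_K(C_{≤i}/C_{≤i−1}) ≤ 1 for all i ≥ 0, where C_{≤i} := {c ∈ C : v(c) ≤ i}; (5) ker(δ) = K. Let g be the unique positive integer with ℤ·v(C'∖{0}) = ℤg. If Δ(a) < 0 for some a ∈ C, then the constant drop Δ equals −g, the map δ is locally nilpotent, and there exists a K-basis {e_i}_{i∈ℕ} of C such that δ(e_i) = e_{i−1} for all i ≥ 0 (with e_{−1} := 0) and C_{≤ig} = ⊕_{j=0}^{i} K·e_j for all i ≥ 0. -/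

import Mathlib

set_option maxHeartbeats 1000000 in
/-- **Theorem 2.2.(3) (negative drop forces local nilpotency).** Let `A` be a `K`-algebra
that is a domain with a degree function `v`, `C` a `K`-subalgebra of `A`, and
`δ : C → C` a `K`-linear map satisfying conditions (1)–(5) of the constant-drop theorem
(hypotheses `h1`–`h5`, with drops stated in additive form). Let `D` be the common value
of the drop `Δ_{δ,v}` on `C' = C ∖ K` (hypothesis `hD`) and let `g` be the unique
positive integer with `ℤ·v(C') = ℤg` (hypotheses `hg`, `hgZ`). If `Δ(a) < 0` for some
`a ∈ C` (i.e. `v(δ(a)) < v(a)` for some `a` with `δ(a) ≠ 0`), then `Δ = D = −g`, the map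
`δ` is locally nilpotent, and there is a `K`-basis `{e_i}_{i∈ℕ}` of `C` such that
`δ(e_i) = e_{i−1}` for all `i ≥ 0` (with `e_{−1} := 0`) and
`C_{≤ig} = ⊕_{j=0}^{i} K e_j` for all `i ≥ 0`. -/
theorem negative_drop_locally_nilpotent
    (K A : Type*) [Field K] [Ring A] [IsDomain A] [Algebra K A]
    (v : A → WithBot ℤ)
    (hv0 : v 0 = ⊥)
    (hvmul : ∀ a b : A, a ≠ 0 → b ≠ 0 → v (a * b) = v a + v b)
    (hvadd : ∀ a b : A, v (a + b) ≤ max (v a) (v b))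
    (hvsc : ∀ k : K, k ≠ 0 → v (algebraMap K A k) = 0)
    (C : Subalgebra K A)
    (δ : C →ₗ[K] C)
    (h1 : ∀ a b : C,
      v (δ (a * b) : A) ≤ max (v (δ a : A) + v (b : A)) (v (δ b : A) + v (a : A)))
    (h2 : ∀ (a : C) (n : ℕ), 1 ≤ n →
      v (δ (a ^ n) : A) + v (a : A) = v (δ a : A) + v ((a : C) ^ n : A))
    (h3a : ∀ c : C, c ≠ 0 → 0 ≤ v (c : A))
    (h3b : {m : WithBot ℤ | ∃ c : C, c ∉ Set.range (algebraMap K C) ∧ v (c : A) = m}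
      ≠ {0})
    (h4 : ∀ (i : ℕ) (a b : C), v (a : A) ≤ ((i : ℤ) : WithBot ℤ) →
      v (b : A) ≤ ((i : ℤ) : WithBot ℤ) →
      ∃ k l : K, (k ≠ 0 ∨ l ≠ 0) ∧ v ((k • a + l • b : C) : A) < ((i : ℤ) : WithBot ℤ))
    (h5 : ∀ c : C, δ c = 0 ↔ c ∈ Set.range (algebraMap K C))
    (g : ℤ) (hg : 0 < g)
    (hgZ : AddSubgroup.closure
        {n : ℤ | ∃ c : C, c ∉ Set.range (algebraMap K C) ∧ v (c : A) = (n : WithBot ℤ)}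
      = AddSubgroup.zmultiples g)
    (D : ℤ)
    (hD : ∀ a : C, a ∉ Set.range (algebraMap K C) →
      v (δ a : A) = v (a : A) + (D : WithBot ℤ))
    (hneg : ∃ a : C, δ a ≠ 0 ∧ v (δ a : A) < v (a : A)) :
    D = -g
    ∧ (∀ c : C, ∃ n : ℕ, 1 ≤ n ∧ (δ ^ n) c = 0)
    ∧ ∃ e : Module.Basis ℕ K C, δ (e 0) = 0 ∧ (∀ i : ℕ, δ (e (i + 1)) = e i)
        ∧ ∀ i : ℕ, {c : C | v (c : A) ≤ (((i : ℤ) * g : ℤ) : WithBot ℤ)}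
            = (Submodule.span K ((e : ℕ → C) '' Set.Iic i) : Set C) := by
  classical
  set R : Set C := Set.range (algebraMap K C) with hRdef
  set S : Set ℤ := {n : ℤ | ∃ c : C, c ∉ Set.range (algebraMap K C) ∧ v (c : A) = (n : WithBot ℤ)} with hSdef
  -- coercion facts
  have hco : ∀ c : C, (c : A) = 0 ↔ c = 0 := fun c => ZeroMemClass.coe_eq_zero
  have hone : ((1 : C) : A) = 1 := rfl
  have hv1 : v ((1 : C) : A) = 0 := by
    rw [hone, show (1 : A) = algebraMap K A 1 by simp]
    exact hvsc 1 one_ne_zero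
  have hv1A : v (1 : A) = 0 := by simpa using hv1
  have hvm1 : v (-1 : A) = 0 := by
    have h := hvmul (-1) (-1) (by simp) (by simp)
    rw [neg_mul_neg, one_mul] at h
    have h1 : v (1 : A) = 0 := by simpa using hv1
    rw [h1] at h
    cases hb : v (-1 : A) with
    | bot => rw [hb] at h; simp at h
    | coe n =>
      rw [hb] at h
      have : (0 : ℤ) = n + n := by exact_mod_cast h
      have : n = 0 := by omega
      simp [this]
  have hvneg : ∀ x : A, v (-x) = v x := by
    intro x
    rcases eq_or_ne x 0 with rfl | hx
    · simp
    · have := hvmul (-1) x (by simp) hx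
      rw [neg_one_mul, hvm1, zero_add] at this
      exact this
  have hveq : ∀ x y : A, v y < v x → v (x + y) = v x := by
    intro x y hlt
    refine le_antisymm ((hvadd x y).trans (by rw [max_eq_left hlt.le])) ?_
    have h2 : v x ≤ max (v (x + y)) (v y) := by
      have := hvadd (x + y) (-y)
      rw [add_neg_cancel_right, hvneg] at this
      exact this
    rcases max_cases (v (x + y)) (v y) with ⟨h, _⟩ | ⟨h, _⟩
    · rwa [h] at h2
    · rw [h] at h2; exact absurd hlt (not_lt.mpr h2)
  -- algebraMap into C, coerced to A
  have halgco : ∀ k : K, ((algebraMap K C k : C) : A) = algebraMap K A k := by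
    intro k; rfl
  have hvR : ∀ c : C, c ∈ R → c ≠ 0 → v (c : A) = 0 := by
    rintro c ⟨k, rfl⟩ hne
    have hk : k ≠ 0 := by rintro rfl; exact hne (map_zero _)
    rw [halgco]; exact hvsc k hk
  have h1C : (1 : C) ≠ 0 := by
    intro h
    have : ((1 : C) : A) = 0 := by rw [h]; rfl
    rw [hone] at this; exact one_ne_zero this
  have hvlt0 : ∀ x : C, v (x : A) < 0 → x = 0 := by
    intro x hx
    by_contra hne
    exact absurd (h3a x hne) (not_le.mpr hx)
  have hsmul1 : ∀ k : K, (k • (1 : C)) = algebraMap K C k := by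
    intro k; rw [Algebra.algebraMap_eq_smul_one]
  have hv0R : ∀ c : C, v (c : A) ≤ 0 → c ∈ R := by
    intro c hc
    rcases eq_or_ne c 0 with rfl | hne
    · exact ⟨0, map_zero _⟩
    obtain ⟨k, l, hkl, hlt⟩ := h4 0 c 1 (by simpa using hc) (by simp [hv1A])
    have hz : k • c + l • (1 : C) = 0 := hvlt0 _ (by simpa using hlt)
    rcases eq_or_ne k 0 with rfl | hk
    · rcases hkl with h | hl
      · exact absurd rfl h
      · rw [zero_smul, zero_add] at hz
        exact absurd (by simpa [hl] using smul_eq_zero.mp hz) h1C.elim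
    · have : c = (-(k⁻¹ * l)) • (1 : C) := by
        have : k • c = -(l • (1 : C)) := by linear_combination (norm := module) hz
        calc c = k⁻¹ • (k • c) := by rw [smul_smul, inv_mul_cancel₀ hk, one_smul]
        _ = (-(k⁻¹ * l)) • (1 : C) := by rw [this, smul_neg, smul_smul]; module
      rw [this, hsmul1]; exact ⟨_, rfl⟩
  have hnotR : ∀ c : C, c ∉ R → c ≠ 0 ∧ 0 < v (c : A) ∧ δ c ≠ 0 := by
    intro c hc
    have hne : c ≠ 0 := by rintro rfl; exact hc ⟨0, map_zero _⟩
    have hpos : 0 < v (c : A) := by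
      rcases lt_or_ge 0 (v (c : A)) with h | h
      · exact h
      · exact absurd (hv0R c h) hc
    exact ⟨hne, hpos, fun h => hc ((h5 c).mp h)⟩
  have hval : ∀ c : C, c ∉ R → ∃ n : ℤ, 0 < n ∧ v (c : A) = (n : WithBot ℤ) ∧ n ∈ S := by
    intro c hc
    obtain ⟨hne, hpos, -⟩ := hnotR c hc
    cases hb : v (c : A) with
    | bot => rw [hb] at hpos; exact absurd hpos (by simp)
    | coe n =>
      rw [hb] at hpos
      exact ⟨n, by exact_mod_cast hpos, rfl, ⟨c, hc, hb⟩⟩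
  have hdvd : ∀ n ∈ S, g ∣ n := by
    intro n hn
    have : n ∈ AddSubgroup.closure S := AddSubgroup.subset_closure hn
    rw [hgZ] at this
    exact Int.mem_zmultiples_iff.mp this
  have hDneg : D < 0 := by
    obtain ⟨a, haδ, halt⟩ := hneg
    have haR : a ∉ R := fun h => haδ ((h5 a).mpr h)
    obtain ⟨n, -, hn, -⟩ := hval a haR
    rw [hD a haR, hn] at halt
    have : n + D < n := by exact_mod_cast halt
    omega
  -- descent: values are positive multiples of -D
  have hdesc : ∀ n : ℕ, ∀ c : C, c ∉ R → v (c : A) ≤ ((n : ℤ) : WithBot ℤ) →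
      (∃ k : ℕ, (δ ^ k) c ∉ R ∧ (δ ^ (k + 1)) c ∈ R) ∧
      (∃ m : ℤ, v (c : A) = (m : WithBot ℤ) ∧ (-D) ∣ m) := by
    intro n
    induction n using Nat.strong_induction_on with
    | _ n IH =>
      intro c hc hcn
      obtain ⟨m, hmpos, hm, -⟩ := hval c hc
      have hmn : m ≤ (n : ℤ) := by rw [hm] at hcn; exact_mod_cast hcn
      rcases Classical.em (δ c ∈ R) with hδR | hδR
      · have hδne : δ c ≠ 0 := (hnotR c hc).2.2
        have h0 : v ((δ c : C) : A) = 0 := hvR _ hδR hδne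
        have hD0 : v ((δ c : C) : A) = (m : WithBot ℤ) + (D : WithBot ℤ) := by
          rw [hD c hc, hm]
        rw [h0] at hD0
        have hmD : (0 : ℤ) = m + D := by exact_mod_cast hD0
        refine ⟨⟨0, by simpa using hc, by simpa using hδR⟩, ⟨m, hm, ⟨1, by omega⟩⟩⟩
      · have hδne : δ c ≠ 0 := (hnotR c hc).2.2
        obtain ⟨p, hppos, hp, -⟩ := hval (δ c) hδR
        have hpD : p = m + D := by
          have := hD c hc
          rw [hp, hm] at this
          exact_mod_cast this
        have hn1 : 1 ≤ n := by omega
        have hple : v ((δ c : C) : A) ≤ (((n - 1 : ℕ) : ℤ) : WithBot ℤ) := by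
          rw [hp]
          have : p ≤ ((n - 1 : ℕ) : ℤ) := by omega
          exact_mod_cast this
        obtain ⟨⟨k, hk1, hk2⟩, ⟨m', hm', hdvd'⟩⟩ := IH (n - 1) (by omega) (δ c) hδR hple
        have hmm' : m' = m + D := by
          rw [hp] at hm'
          have : p = m' := by exact_mod_cast hm'
          omega
        refine ⟨⟨k + 1, ?_, ?_⟩, ⟨m, hm, ?_⟩⟩
        · rwa [pow_succ, Module.End.mul_apply]
        · rwa [pow_succ (δ) (k+1), Module.End.mul_apply]
        · have hmd : (-D) ∣ (m + D) := hmm' ▸ hdvd'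
          obtain ⟨t, ht⟩ := hmd
          exact ⟨t + 1, by linear_combination ht⟩
  have hdescAll : ∀ c : C, c ∉ R →
      (∃ k : ℕ, (δ ^ k) c ∉ R ∧ (δ ^ (k + 1)) c ∈ R) ∧
      (∃ m : ℤ, v (c : A) = (m : WithBot ℤ) ∧ (-D) ∣ m) := by
    intro c hc
    obtain ⟨m, hmpos, hm, -⟩ := hval c hc
    exact hdesc m.toNat c hc (by rw [hm]; exact_mod_cast (by omega : m ≤ (m.toNat : ℤ)))
  -- there is an element of value -D
  have hminval : ∃ b : C, b ∉ R ∧ v (b : A) = ((-D : ℤ) : WithBot ℤ) := by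
    obtain ⟨a, haδ, -⟩ := hneg
    have haR : a ∉ R := fun h => haδ ((h5 a).mpr h)
    obtain ⟨⟨k, hk1, hk2⟩, -⟩ := hdescAll a haR
    set b := (δ ^ k) a with hb
    have hδb : δ b ≠ 0 := (hnotR b hk1).2.2
    have hδbR : δ b ∈ R := by
      have e1 : (δ ^ (k+1)) a = δ b := by rw [pow_succ', Module.End.mul_apply]
      rwa [e1] at hk2
    have h0 : v ((δ b : C) : A) = 0 := hvR _ hδbR hδb
    obtain ⟨m, hmpos, hm, -⟩ := hval b hk1
    have : (0 : WithBot ℤ) = (m : WithBot ℤ) + (D : WithBot ℤ) := by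
      rw [← h0, hD b hk1, hm]
    have hmD : (0 : ℤ) = m + D := by exact_mod_cast this
    exact ⟨b, hk1, by rw [hm]; congr 1; omega⟩
  have hDg : D = -g := by
    obtain ⟨b, hbR, hbv⟩ := hminval
    have hmemS : (-D) ∈ S := ⟨b, hbR, hbv⟩
    have hgdvd : g ∣ (-D) := hdvd _ hmemS
    have hsub : S ⊆ {n : ℤ | (-D) ∣ n} := by
      intro n hn
      obtain ⟨c, hcR, hcv⟩ := hn
      obtain ⟨-, ⟨m, hm, hdvd'⟩⟩ := hdescAll c hcR
      have : m = n := by rw [hm] at hcv; exact_mod_cast hcv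
      exact this ▸ hdvd'
    have hclos : AddSubgroup.closure S ≤ AddSubgroup.zmultiples (-D) := by
      rw [AddSubgroup.closure_le]
      intro n hn
      exact Int.mem_zmultiples_iff.mpr (hsub hn)
    have hgmem : g ∈ AddSubgroup.zmultiples (-D) := by
      apply hclos
      rw [hgZ]
      exact AddSubgroup.mem_zmultiples g
    have hDdvdg : (-D) ∣ g := Int.mem_zmultiples_iff.mp hgmem
    have := Int.dvd_antisymm (by omega) (by omega) hDdvdg hgdvd
    omega
  have hvsmul : ∀ (k : K) (c : C), k ≠ 0 → v ((k • c : C) : A) = v (c : A) := by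
    intro k c hk
    have hcoe : ((k • c : C) : A) = algebraMap K A k * (c : A) := by
      rw [Subalgebra.coe_smul, Algebra.smul_def]
    rcases eq_or_ne c 0 with rfl | hc
    · simp [hcoe]
    have halgne : algebraMap K A k ≠ 0 := by
      intro h
      have := hvsc k hk
      rw [h, hv0] at this
      exact absurd this (by simp)
    rw [hcoe, hvmul _ _ halgne (fun h => hc ((hco c).mp h)), hvsc k hk, zero_add]
  have hvalm : ∀ x : C, x ≠ 0 → ∃ m : ℤ, 0 ≤ m ∧ v (x : A) = (m : WithBot ℤ) := by
    intro x hx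
    have := h3a x hx
    cases hb : v (x : A) with
    | bot => rw [hb] at this; exact absurd this (by simp)
    | coe m => rw [hb] at this; exact ⟨m, by exact_mod_cast this, rfl⟩
  obtain ⟨b, hbR, hbv⟩ := hminval
  have hbv : v (b : A) = (g : WithBot ℤ) := by rw [hbv]; congr 1; omega
  have hbne : b ≠ 0 := (hnotR b hbR).1
  -- key step towards surjectivity: produce an element of any given value + g
  have hsurjn : ∀ n : ℕ, ∀ x : C, v (x : A) ≤ ((n : ℤ) : WithBot ℤ) → ∃ y : C, δ y = x := by
    intro n
    induction n using Nat.strong_induction_on with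
    | _ n IH =>
      intro x hxn
      rcases eq_or_ne x 0 with rfl | hx
      · exact ⟨0, map_zero _⟩
      obtain ⟨m, hm0, hm⟩ := hvalm x hx
      have hmn : m ≤ (n : ℤ) := by rw [hm] at hxn; exact_mod_cast hxn
      set z := x * b with hzdef
      have hzne : z ≠ 0 := by
        intro h
        have h0 : ((z : C) : A) = 0 := by rw [h]; rfl
        rw [hzdef, MulMemClass.coe_mul] at h0
        rcases mul_eq_zero.mp h0 with h' | h'
        · exact hx ((hco x).mp h')
        · exact hbne ((hco b).mp h')
      have hzv : v (z : A) = ((m + g : ℤ) : WithBot ℤ) := by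
        rw [hzdef, MulMemClass.coe_mul,
          hvmul _ _ (fun h => hx ((hco x).mp h)) (fun h => hbne ((hco b).mp h)), hm, hbv]
        push_cast; ring
      have hzR : z ∉ R := by
        intro hzR
        have := hvR z hzR hzne
        rw [hzv] at this
        have : m + g = 0 := by exact_mod_cast this
        omega
      have hδzne : δ z ≠ 0 := (hnotR z hzR).2.2
      have hδzv : v ((δ z : C) : A) = (m : WithBot ℤ) := by
        rw [hD z hzR, hzv, hDg]
        have : ((m + g : ℤ) : WithBot ℤ) + ((-g : ℤ) : WithBot ℤ) = ((m : ℤ) : WithBot ℤ) := by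
          rw [← WithBot.coe_add]; congr 1; omega
        exact this
      have hmt : ((m.toNat : ℤ) : WithBot ℤ) = (m : WithBot ℤ) := by
        congr 1; omega
      obtain ⟨k, l, hkl, hlt⟩ := h4 m.toNat x (δ z)
        (by rw [hm, hmt]) (by rw [hδzv, hmt])
      rw [hmt] at hlt
      set w := k • x + l • δ z with hwdef
      have hk : k ≠ 0 := by
        rintro rfl
        have hl : l ≠ 0 := by
          rcases hkl with h | h
          · exact absurd rfl h
          · exact h
        have hweq : w = l • δ z := by rw [hwdef, zero_smul, zero_add]
        rw [hweq, hvsmul l (δ z) hl, hδzv] at hlt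
        exact absurd hlt (lt_irrefl _)
      have hy' : ∃ y' : C, δ y' = w := by
        rcases eq_or_ne w 0 with hw | hw
        · exact ⟨0, by rw [map_zero, hw]⟩
        obtain ⟨p, hp0, hp⟩ := hvalm w hw
        have hpm : p < m := by rw [hp] at hlt; exact_mod_cast hlt
        have hn1 : 1 ≤ n := by omega
        refine IH (n - 1) (by omega) w ?_
        rw [hp]
        exact_mod_cast (by omega : p ≤ ((n - 1 : ℕ) : ℤ))
      obtain ⟨y', hy'⟩ := hy'
      refine ⟨k⁻¹ • (y' - l • z), ?_⟩
      rw [map_smul, map_sub, map_smul, hy', hwdef]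
      rw [show k • x + l • δ z - l • δ z = k • x from by module]
      rw [smul_smul, inv_mul_cancel₀ hk, one_smul]
  have hsurj : ∀ x : C, ∃ y : C, δ y = x := by
    intro x
    rcases eq_or_ne x 0 with rfl | hx
    · exact ⟨0, map_zero _⟩
    obtain ⟨m, hm0, hm⟩ := hvalm x hx
    exact hsurjn m.toNat x (by rw [hm]; exact_mod_cast (by omega : m ≤ (m.toNat : ℤ)))
  -- construct the chain e
  choose f hf using hsurj
  obtain ⟨e, he0, hestep⟩ : ∃ e : ℕ → C, e 0 = 1 ∧ ∀ i, δ (e (i + 1)) = e i :=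
    ⟨fun i => Nat.rec (1 : C) (fun _ prev => f prev) i, rfl, fun i => hf _⟩
  have hene : ∀ i, e i ≠ 0 := by
    intro i
    induction i with
    | zero => rw [he0]; exact h1C
    | succ i IH =>
      intro h
      rw [← hestep i, h, map_zero] at IH
      exact IH rfl
  have henR : ∀ i, e (i + 1) ∉ R := by
    intro i h
    have := (h5 (e (i + 1))).mpr h
    rw [hestep i] at this
    exact hene i this
  have heval : ∀ i : ℕ, v ((e i : C) : A) = (((i : ℤ) * g : ℤ) : WithBot ℤ) := by
    intro i
    induction i with
    | zero => rw [he0, hv1]; norm_num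
    | succ i IH =>
      obtain ⟨m, hm0, hm⟩ := hvalm (e (i + 1)) (hene (i + 1))
      have := hD (e (i + 1)) (henR i)
      rw [hestep i, IH, hm, hDg, ← WithBot.coe_add] at this
      have h' : (i : ℤ) * g = m + -g := by exact_mod_cast this
      rw [hm]
      have : m = ((i : ℤ) + 1) * g := by linear_combination -h'
      rw [this]
      push_cast
      ring_nf
  -- span reverse inclusion via submodule
  have hMsub : ∀ (i : ℕ) (c : C), c ∈ Submodule.span K (e '' Set.Iic i) →
      v (c : A) ≤ (((i : ℤ) * g : ℤ) : WithBot ℤ) := by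
    intro i c hc
    set B : WithBot ℤ := (((i : ℤ) * g : ℤ) : WithBot ℤ) with hB
    let M : Submodule K C :=
      { carrier := {c : C | v (c : A) ≤ B}
        add_mem' := by
          intro a b ha hb
          rw [Set.mem_setOf_eq] at ha hb ⊢
          have hco' : ((a + b : C) : A) = (a : A) + (b : A) := rfl
          rw [hco']
          exact le_trans (hvadd _ _) (max_le ha hb)
        zero_mem' := by
          have : ((0 : C) : A) = 0 := rfl
          simp only [Set.mem_setOf_eq, this, hv0]
          exact bot_le
        smul_mem' := by
          intro k c hc
          rcases eq_or_ne k 0 with rfl | hk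
          · rw [zero_smul]
            have : ((0 : C) : A) = 0 := rfl
            simp only [Set.mem_setOf_eq, this, hv0]
            exact bot_le
          · rw [Set.mem_setOf_eq, hvsmul k c hk]; exact hc }
    have hgen : e '' Set.Iic i ⊆ (M : Set C) := by
      rintro x ⟨j, hj, rfl⟩
      have hj' : (j : ℤ) ≤ (i : ℤ) := by exact_mod_cast Set.mem_Iic.mp hj
      have : v ((e j : C) : A) ≤ B := by
        rw [heval j, hB]
        exact_mod_cast mul_le_mul_of_nonneg_right hj' hg.le
      exact this
    exact (Submodule.span_le.mpr hgen) hc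
  -- spanning
  have hspan : ∀ (i : ℕ) (c : C), v (c : A) ≤ (((i : ℤ) * g : ℤ) : WithBot ℤ) →
      c ∈ Submodule.span K (e '' Set.Iic i) := by
    intro i
    induction i with
    | zero =>
      intro c hc
      have hc0 : v (c : A) ≤ 0 := by simpa using hc
      obtain ⟨k, hk⟩ := hv0R c hc0
      have : c = k • e 0 := by rw [he0, hsmul1, hk]
      rw [this]
      exact Submodule.smul_mem _ _ (Submodule.subset_span ⟨0, Set.mem_Iic.mpr le_rfl, rfl⟩)
    | succ i IH =>
      intro c hc
      set N : ℕ := (((i : ℤ) + 1) * g).toNat with hN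
      have hNg : ((N : ℤ) : WithBot ℤ) = ((((i : ℕ) + 1 : ℤ)) * g : ℤ) := by
        have : (N : ℤ) = ((i : ℤ) + 1) * g := by
          rw [hN]; exact Int.toNat_of_nonneg (by positivity)
        rw [this]
      obtain ⟨k, l, hkl, hlt⟩ := h4 N c (e (i + 1))
        (by rw [hNg]; exact_mod_cast hc)
        (by rw [hNg, heval (i + 1)]; push_cast; exact le_rfl)
      rw [hNg] at hlt
      set w := k • c + l • e (i + 1) with hwdef
      have hk : k ≠ 0 := by
        rintro rfl
        have hl : l ≠ 0 := by
          rcases hkl with h | h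
          · exact absurd rfl h
          · exact h
        have hweq : w = l • e (i + 1) := by rw [hwdef, zero_smul, zero_add]
        rw [hweq, hvsmul l _ hl, heval (i + 1)] at hlt
        have : ((i : ℤ) + 1) * g < ((i : ℤ) + 1) * g := by
          have := hlt; push_cast at this ⊢; exact_mod_cast this
        exact absurd this (lt_irrefl _)
      have hwmem : w ∈ Submodule.span K (e '' Set.Iic i) := by
        rcases eq_or_ne w 0 with hw | hw
        · rw [hw]; exact Submodule.zero_mem _
        obtain ⟨p, hp0, hp⟩ := hvalm w hw
        have hplt : p < ((i : ℤ) + 1) * g := by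
          rw [hp] at hlt
          exact_mod_cast hlt
        have hpig : p ≤ (i : ℤ) * g := by
          rcases Classical.em (w ∈ R) with hwR | hwR
          · have := hvR w hwR hw
            rw [hp] at this
            have : p = 0 := by exact_mod_cast this
            rw [this]
            positivity
          · obtain ⟨n', hn'pos, hn', hn'S⟩ := hval w hwR
            have hpn : p = n' := by rw [hp] at hn'; exact_mod_cast hn'
            obtain ⟨q, hq⟩ := hdvd n' hn'S
            have hqlt : q < (i : ℤ) + 1 := by
              have : g * q < g * ((i : ℤ) + 1) := by
                rw [← hq, ← hpn]
                calc p < ((i : ℤ) + 1) * g := hplt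
                _ = g * ((i : ℤ) + 1) := by ring
              exact lt_of_mul_lt_mul_left this hg.le
            have : g * q ≤ g * (i : ℤ) := mul_le_mul_of_nonneg_left (by omega) hg.le
            rw [hpn, hq]
            calc g * q ≤ g * (i : ℤ) := this
            _ = (i : ℤ) * g := by ring
        apply IH
        rw [hp]
        exact_mod_cast hpig
      have hwmem' : w ∈ Submodule.span K (e '' Set.Iic (i + 1)) :=
        Submodule.span_mono (Set.image_mono (Set.Iic_subset_Iic.mpr (by omega))) hwmem
      have hemem : e (i + 1) ∈ Submodule.span K (e '' Set.Iic (i + 1)) :=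
        Submodule.subset_span ⟨i + 1, Set.mem_Iic.mpr le_rfl, rfl⟩
      have hw' : w - l • e (i + 1) = k • c := by rw [hwdef]; exact add_sub_cancel_right _ _
      have hc2 : k⁻¹ • (w - l • e (i + 1)) = c := by
        rw [hw', smul_smul, inv_mul_cancel₀ hk, one_smul]
      rw [← hc2]
      exact Submodule.smul_mem _ _ (Submodule.sub_mem _ hwmem' (Submodule.smul_mem _ _ hemem))
  -- top span
  have htop : ∀ c : C, c ∈ Submodule.span K (Set.range e) := by
    intro c
    rcases eq_or_ne c 0 with rfl | hc
    · exact Submodule.zero_mem _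
    obtain ⟨m, hm0, hm⟩ := hvalm c hc
    have hmig : m ≤ ((m.toNat : ℤ)) * g := by
      have h1 : (m.toNat : ℤ) = m := Int.toNat_of_nonneg hm0
      rw [h1]
      nlinarith
    have : c ∈ Submodule.span K (e '' Set.Iic m.toNat) := by
      apply hspan
      rw [hm]
      exact_mod_cast hmig
    exact Submodule.span_mono (Set.image_subset_range e _) this
  -- sum bound
  have hvsum : ∀ (s : Finset ℕ) (x : ℕ → C) (B : WithBot ℤ),
      (∀ j ∈ s, v ((x j : C) : A) ≤ B) → v ((∑ j ∈ s, x j : C) : A) ≤ B := by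
    intro s x B hx
    refine Finset.sum_induction x (fun c => v ((c : C) : A) ≤ B) ?_ ?_ hx
    · intro a b ha hb
      have hco' : ((a + b : C) : A) = (a : A) + (b : A) := rfl
      calc v ((a + b : C) : A) = v ((a : A) + (b : A)) := by rw [hco']
      _ ≤ max (v (a : A)) (v (b : A)) := hvadd _ _
      _ ≤ B := max_le ha hb
    · simp only [ZeroMemClass.coe_zero, hv0]; exact bot_le
  -- linear independence
  have hli : LinearIndependent K e := by
    rw [linearIndependent_iff']
    intro s φ hsum
    by_contra hcon
    push_neg at hcon
    obtain ⟨i0, hi0s, hφi0⟩ := hcon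
    set t := s.filter (fun j => φ j ≠ 0) with ht
    have htne : t.Nonempty := ⟨i0, Finset.mem_filter.mpr ⟨hi0s, hφi0⟩⟩
    set j0 := t.max' htne with hj0
    have hj0t : j0 ∈ t := t.max'_mem htne
    have hφj0 : φ j0 ≠ 0 := (Finset.mem_filter.mp hj0t).2
    have hsum' : ∑ j ∈ t, φ j • e j = 0 := by
      rw [← hsum]
      exact Finset.sum_filter_of_ne (fun j _ hne => by
        intro h; exact hne (by rw [h, zero_smul]))
    rw [← Finset.insert_erase hj0t, Finset.sum_insert (Finset.notMem_erase _ _)] at hsum'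
    have heq : φ j0 • e j0 = -∑ j ∈ t.erase j0, φ j • e j :=
      eq_neg_of_add_eq_zero_left hsum'
    have hvL : v ((φ j0 • e j0 : C) : A) = (((j0 : ℤ) * g : ℤ) : WithBot ℤ) := by
      rw [hvsmul _ _ hφj0, heval]
    have hvRle : v ((-∑ j ∈ t.erase j0, φ j • e j : C) : A)
        ≤ (((j0 : ℤ) * g - g : ℤ) : WithBot ℤ) := by
      have hneg' : ((-∑ j ∈ t.erase j0, φ j • e j : C) : A)
          = -((∑ j ∈ t.erase j0, φ j • e j : C) : A) := rfl
      rw [hneg', hvneg]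
      apply hvsum
      intro j hj
      have hjt : j ∈ t := Finset.mem_of_mem_erase hj
      have hjne : j ≠ j0 := Finset.ne_of_mem_erase hj
      have hjle : j ≤ j0 := Finset.le_max' t j hjt
      have hφj : φ j ≠ 0 := (Finset.mem_filter.mp hjt).2
      rw [hvsmul _ _ hφj, heval]
      have : (j : ℤ) * g ≤ (j0 : ℤ) * g - g := by
        have hj1 : (j : ℤ) ≤ (j0 : ℤ) - 1 := by
          have h' : j < j0 := lt_of_le_of_ne hjle hjne
          have h'' : (j : ℤ) < (j0 : ℤ) := by exact_mod_cast h'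
          omega
        nlinarith
      exact_mod_cast this
    rw [heq, ] at hvL
    rw [hvL] at hvRle
    have : (j0 : ℤ) * g ≤ (j0 : ℤ) * g - g := by exact_mod_cast hvRle
    omega
  let eb : Module.Basis ℕ K C := Module.Basis.mk hli (fun x _ => htop x)
  have hebcoe : ⇑eb = e := Module.Basis.coe_mk _ _
  -- nilpotency on basis elements
  have hδ1 : δ (1 : C) = 0 := (h5 1).mpr ⟨1, map_one _⟩
  have hnile : ∀ j, (δ ^ (j + 1)) (e j) = 0 := by
    intro j
    induction j with
    | zero => rw [pow_one, he0]; exact hδ1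
    | succ j IH =>
      rw [pow_succ, Module.End.mul_apply, hestep j]
      exact IH
  have hnille : ∀ i j : ℕ, j ≤ i → (δ ^ (i + 1)) (e j) = 0 := by
    intro i j hj
    have hsplit : δ ^ (i + 1) = δ ^ (i - j) * δ ^ (j + 1) := by
      rw [← pow_add]
      congr 1
      omega
    rw [hsplit, Module.End.mul_apply, hnile j, map_zero]
  have hker : ∀ i : ℕ, Submodule.span K (e '' Set.Iic i) ≤ LinearMap.ker (δ ^ (i + 1)) := by
    intro i
    rw [Submodule.span_le]
    rintro x ⟨j, hj, rfl⟩
    exact LinearMap.mem_ker.mpr (hnille i j (Set.mem_Iic.mp hj))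
  refine ⟨hDg, ?_, ?_⟩
  · intro c
    rcases eq_or_ne c 0 with rfl | hc
    · exact ⟨1, le_rfl, map_zero _⟩
    obtain ⟨m, hm0, hm⟩ := hvalm c hc
    have hmem := hspan m.toNat c (by
      rw [hm]
      have h1 : (m.toNat : ℤ) = m := Int.toNat_of_nonneg hm0
      have h2' : m ≤ (m.toNat : ℤ) * g := by rw [h1]; nlinarith
      exact_mod_cast h2')
    exact ⟨m.toNat + 1, by omega, LinearMap.mem_ker.mp (hker m.toNat hmem)⟩
  · refine ⟨eb, ?_, ?_, ?_⟩
    · rw [show eb 0 = e 0 from by rw [hebcoe], he0]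
      exact hδ1
    · intro i
      rw [show eb (i + 1) = e (i + 1) from by rw [hebcoe],
        show eb i = e i from by rw [hebcoe]]
      exact hestep i
    · intro i
      rw [hebcoe]
      ext c
      simp only [Set.mem_setOf_eq, SetLike.mem_coe]
      exact ⟨fun hc => hspan i c hc, fun hc => hMsub i c hc⟩
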